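/- arXiv:1307.7641 — 2 statements merged into one kernel-verified Lean document; each statement's English description precedes it below -/
import Mathlib

section
/- Let F ∈ ℤ[t₁,...,t_s], A ∈ ℤ, a ∈ ℤ^s, and let m, ℓ, δ be nonnegative integers with m ≥ 2δ+1 and 0 ≤ δ ≤ m − ℓ. Define R_δ(p^m, A; p^ℓ) as the set of t ∈ (ℤ/p^mℤ)^s with F(t) ≡ A mod p^m, v_p(∇F(t)) = δ, and t ≡ a mod p^ℓ. Then for every k ∈ ℤ/pℤ, #R_δ(p^m, A; p^ℓ)/p^{m(s−1)} = #R_δ(p^{m+1}, A + k p^m; p^ℓ)/p^{(m+1)(s−1)}. -/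
open MvPolynomial

open MvPolynomial in
lemma eval_sub_dvd' {s : ℕ} (c : ℤ) (t₁ t₂ : Fin s → ℤ) (h : ∀ i, c ∣ t₁ i - t₂ i)
    (F : MvPolynomial (Fin s) ℤ) : c ∣ eval t₁ F - eval t₂ F := by
  induction F using MvPolynomial.induction_on with
  | C a => simp
  | add F G hF hG =>
      simp only [map_add]
      have := Int.dvd_add hF hG; convert this using 1; ring
  | mul_X F i hF =>
      simp only [map_mul, eval_X]
      have : eval t₁ F * t₁ i - eval t₂ F * t₂ i
          = (eval t₁ F - eval t₂ F) * t₁ i + eval t₂ F * (t₁ i - t₂ i) := by ring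
      rw [this]
      exact dvd_add (hF.mul_right _) ((h i).mul_left _)

open MvPolynomial in
lemma taylor_dvd' {s : ℕ} (c : ℤ) (t h : Fin s → ℤ) (hc : ∀ i, c ∣ h i)
    (F : MvPolynomial (Fin s) ℤ) :
    c ^ 2 ∣ eval (fun i => t i + h i) F - eval t F
      - ∑ i, h i * eval t (pderiv i F) := by
  induction F using MvPolynomial.induction_on with
  | C a => simp
  | add F G hF hG =>
      have := Int.dvd_add hF hG
      convert this using 1
      simp only [map_add]
      rw [show (∑ x : Fin s, h x * (eval t ((pderiv x) F) + eval t ((pderiv x) G)))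
          = (∑ i : Fin s, h i * eval t (pderiv i F)) + ∑ i : Fin s, h i * eval t (pderiv i G) by
        rw [← Finset.sum_add_distrib]; apply Finset.sum_congr rfl; intros; ring]
      ring
  | mul_X F j hF =>
      classical
      have h1 : c ∣ eval (fun i => t i + h i) F - eval t F := by
        apply eval_sub_dvd'; intro i; simpa using hc i
      simp only [map_mul, eval_X, pderiv_mul, map_add, pderiv_X]
      have hsum : ∑ x : Fin s, h x * (eval t (pderiv x F) * t j
            + eval t F * eval t (Pi.single (M := fun _ => MvPolynomial (Fin s) ℤ) x 1 j))
          = (∑ i, h i * eval t (pderiv i F)) * t j + h j * eval t F := by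
        simp only [mul_add]
        rw [Finset.sum_add_distrib]
        congr 1
        · rw [Finset.sum_mul]; apply Finset.sum_congr rfl; intros; ring
        · rw [Finset.sum_eq_single j]
          · simp
          · intro b _ hb
            simp [Pi.single_apply, hb]
          · simp
      rw [hsum]
      have key : eval (fun i => t i + h i) F * (t j + h j) - eval t F * t j
            - ((∑ i, h i * eval t (pderiv i F)) * t j + h j * eval t F)
          = (eval (fun i => t i + h i) F - eval t F - ∑ i, h i * eval t (pderiv i F)) * t j
            + h j * (eval (fun i => t i + h i) F - eval t F) := by ring
      rw [key]
      refine dvd_add (hF.mul_right _) ?_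
      rw [sq]
      exact mul_dvd_mul (hc j) h1


lemma finite_box' {s : ℕ} (B : ℤ) (P : (Fin s → ℤ) → Prop) :
    Finite {t : Fin s → ℤ // (∀ i, 0 ≤ t i ∧ t i < B) ∧ P t} := by
  have h : {t : Fin s → ℤ | (∀ i, 0 ≤ t i ∧ t i < B) ∧ P t}.Finite := by
    apply Set.Finite.subset (Set.Finite.pi (fun i : Fin s => Set.finite_Ico (0:ℤ) B))
    intro t ht
    simp only [Set.mem_pi, Set.mem_univ, forall_true_left, Set.mem_Ico]
    exact fun i => ht.1 i
  exact h.to_subtype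

noncomputable def wvec' (p δ : ℕ) {s : ℕ} (F : MvPolynomial (Fin s) ℤ) (d : ℤ)
    (r : Fin s → ℤ) : Fin s → ℤ :=
  if h : ∃ i, ¬ (p:ℤ)^(δ+1) ∣ eval r (pderiv i F) then
    Pi.single (Classical.choose h)
      (d * ((((eval r (pderiv (Classical.choose h) F) / (p:ℤ)^δ : ℤ) : ZMod p)⁻¹).val : ℤ))
  else 0

lemma wvec'_spec (p : ℕ) (hp : p.Prime) (δ : ℕ) {s : ℕ} (F : MvPolynomial (Fin s) ℤ) (d : ℤ)
    (t : Fin s → ℤ)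
    (h1 : ∀ i, (p:ℤ)^δ ∣ eval t (pderiv i F))
    (h2 : ¬ ∀ i, (p:ℤ)^(δ+1) ∣ eval t (pderiv i F)) :
    (p:ℤ)^(δ+1) ∣ (∑ i, wvec' p δ F d (fun j => t j % (p:ℤ)^(δ+1)) i * eval t (pderiv i F))
      - (p:ℤ)^δ * d := by
  haveI : Fact p.Prime := ⟨hp⟩
  have hp0 : (p:ℤ) ≠ 0 := by exact_mod_cast hp.ne_zero
  set q : ℤ := (p:ℤ)^(δ+1) with hq
  set r : Fin s → ℤ := fun j => t j % q with hrdef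
  have hr : ∀ i, q ∣ r i - t i := by
    intro i
    have : r i - t i = -(q * (t i / q)) := by
      simp only [hrdef, Int.emod_def]; ring
    rw [this]; exact (Dvd.intro _ rfl).neg_right
  have hcong : ∀ i, q ∣ eval r (pderiv i F) - eval t (pderiv i F) :=
    fun i => eval_sub_dvd' q r t hr _
  have hex : ∃ i, ¬ q ∣ eval r (pderiv i F) := by
    by_contra hco
    push_neg at hco
    exact h2 fun i => by
      have := dvd_sub (hco i) (hcong i)
      simpa using this
  have hspec : ¬ q ∣ eval r (pderiv (Classical.choose hex) F) := Classical.choose_spec hex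
  set i₀ : Fin s := Classical.choose hex with hi₀
  have hw : wvec' p δ F d r = Pi.single i₀
      (d * ((((eval r (pderiv i₀ F) / (p:ℤ)^δ : ℤ) : ZMod p)⁻¹).val : ℤ)) := by
    rw [wvec', dif_pos hex]
  set g : ℤ := eval r (pderiv i₀ F) / (p:ℤ)^δ with hgdef
  set b : ℤ := (((g : ZMod p)⁻¹).val : ℤ) with hbdef
  have hdvd0 : (p:ℤ)^δ ∣ eval r (pderiv i₀ F) := by
    have : (p:ℤ)^δ ∣ q := pow_dvd_pow _ (Nat.le_succ δ)
    have h' := dvd_add (h1 i₀) (this.trans (hcong i₀))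
    simpa using h'
  have hg : (p:ℤ)^δ * g = eval r (pderiv i₀ F) := Int.mul_ediv_cancel' hdvd0
  have hpg : ¬ (p:ℤ) ∣ g := by
    intro hc
    exact hspec (by rw [← hg, hq, pow_succ]; exact mul_dvd_mul_left _ hc)
  have hgz : (g : ZMod p) ≠ 0 := by
    rw [Ne, ZMod.intCast_zmod_eq_zero_iff_dvd]
    exact_mod_cast hpg
  have hb : (p:ℤ) ∣ b * g - 1 := by
    rw [← ZMod.intCast_zmod_eq_zero_iff_dvd]
    push_cast
    rw [hbdef]
    push_cast [ZMod.natCast_val, ZMod.cast_id]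
    rw [inv_mul_cancel₀ hgz]
    ring
  obtain ⟨gt, hgt⟩ := h1 i₀
  have hggt : (p:ℤ) ∣ g - gt := by
    have h' : q ∣ (p:ℤ)^δ * g - (p:ℤ)^δ * gt := by rw [hg, ← hgt]; exact hcong i₀
    rw [← mul_sub] at h'
    rw [hq, pow_succ] at h'
    exact (mul_dvd_mul_iff_left (pow_ne_zero δ hp0)).1 h'
  have hsum : ∑ i, wvec' p δ F d r i * eval t (pderiv i F)
      = (d * b) * eval t (pderiv i₀ F) := by
    rw [hw]
    rw [Finset.sum_eq_single i₀]
    · simp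
    · intro c _ hc; simp [Pi.single_apply, hc]
    · simp
  rw [hsum, hgt]
  have key : (p:ℤ) ∣ b * gt - 1 := by
    have : b * gt - 1 = (b * g - 1) - b * (g - gt) := by ring
    rw [this]
    exact dvd_sub hb (hggt.mul_left b)
  have : (d * b) * ((p:ℤ)^δ * gt) - (p:ℤ)^δ * d = (p:ℤ)^δ * (d * (b * gt - 1)) := by ring
  rw [this, hq, pow_succ]
  exact mul_dvd_mul_left _ (key.mul_left d)


def SolT (p s : ℕ) (F : MvPolynomial (Fin s) ℤ) (a : Fin s → ℤ)
    (ℓ δ : ℕ) (m : ℕ) (A : ℤ) : Type :=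
  {t : Fin s → ℤ //
    (∀ i, 0 ≤ t i ∧ t i < (p : ℤ) ^ m) ∧
    ((p : ℤ) ^ m ∣ MvPolynomial.eval t F - A) ∧
    (∀ i, (p : ℤ) ^ δ ∣ MvPolynomial.eval t (MvPolynomial.pderiv i F)) ∧
    ¬ (∀ i, (p : ℤ) ^ (δ + 1) ∣ MvPolynomial.eval t (MvPolynomial.pderiv i F)) ∧
    (∀ i, (p : ℤ) ^ ℓ ∣ t i - a i)}


instance solFinite (p s : ℕ) (F : MvPolynomial (Fin s) ℤ) (a : Fin s → ℤ)
    (ℓ δ m : ℕ) (A : ℤ) : Finite (SolT p s F a ℓ δ m A) := finite_box' _ _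

lemma emod_sub_self_dvd (P x : ℤ) : P ∣ x % P - x := by
  have h : x % P - x = -(P * (x / P)) := by rw [Int.emod_def]; ring
  rw [h]; exact (dvd_mul_right P _).neg_right

lemma int_eq_of_dvd_of_bounds {P x y : ℤ} (h : P ∣ x - y) (hx : 0 ≤ x) (hx' : x < P)
    (hy : 0 ≤ y) (hy' : y < P) : x = y := by
  have hxy : x % P = y % P := Int.ModEq.symm (Int.modEq_iff_dvd.mpr h)
  rw [Int.emod_eq_of_lt hx hx', Int.emod_eq_of_lt hy hy'] at hxy
  exact hxy

lemma step1_le (p s : ℕ) (F : MvPolynomial (Fin s) ℤ) (A : ℤ) (a : Fin s → ℤ)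
    (m ℓ δ : ℕ) (hp : p.Prime) (hm : 2*δ+1 ≤ m) (hδℓ : δ+ℓ ≤ m) (k k' : ℤ) :
    Nat.card (SolT p s F a ℓ δ (m+1) (A + k*(p:ℤ)^m))
      ≤ Nat.card (SolT p s F a ℓ δ (m+1) (A + k'*(p:ℤ)^m)) := by
  have hp1 : (1:ℤ) < (p:ℤ) := by exact_mod_cast hp.one_lt
  set P : ℤ := (p:ℤ)^(m+1) with hPdef
  set c : ℤ := (p:ℤ)^(m-δ) with hcdef
  set q : ℤ := (p:ℤ)^(δ+1) with hqdef
  have hP0 : 0 < P := pow_pos (by linarith) _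
  have hqP : q ∣ P := pow_dvd_pow _ (by omega)
  have hqc : q ∣ c := pow_dvd_pow _ (by omega)
  have hlc : (p:ℤ)^ℓ ∣ c := pow_dvd_pow _ (by omega)
  have hlP : (p:ℤ)^ℓ ∣ P := pow_dvd_pow _ (by omega)
  have hdq : (p:ℤ)^δ ∣ q := pow_dvd_pow _ (by omega)
  have hPc2 : P ∣ c^2 := by rw [hcdef, ← pow_mul]; exact pow_dvd_pow _ (by omega)
  have hcq : c * q = P := by rw [hcdef, hqdef, hPdef, ← pow_add]; congr 1; omega
  have hcd : c * (p:ℤ)^δ = (p:ℤ)^m := by rw [hcdef, ← pow_add]; congr 1; omega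
  set w : (Fin s → ℤ) → (Fin s → ℤ) := fun t => wvec' p δ F (k'-k) (fun j => t j % q)
    with hwdef
  set Φ : (Fin s → ℤ) → (Fin s → ℤ) := fun t i => (t i + c * w t i) % P with hΦdef
  have hΦsub : ∀ t i, P ∣ Φ t i - (t i + c * w t i) := fun t i => emod_sub_self_dvd P _
  have hΦq : ∀ t i, q ∣ Φ t i - t i := by
    intro t i
    have he : Φ t i - t i = (Φ t i - (t i + c * w t i)) + c * w t i := by ring
    rw [he]
    exact dvd_add (hqP.trans (hΦsub t i)) (hqc.mul_right _)
  have hΦℓ : ∀ t i, (p:ℤ)^ℓ ∣ Φ t i - t i := by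
    intro t i
    have he : Φ t i - t i = (Φ t i - (t i + c * w t i)) + c * w t i := by ring
    rw [he]
    exact dvd_add (hlP.trans (hΦsub t i)) (hlc.mul_right _)
  -- membership
  have mem : ∀ t : Fin s → ℤ,
      ((∀ i, 0 ≤ t i ∧ t i < (p : ℤ) ^ (m+1)) ∧
       ((p : ℤ) ^ (m+1) ∣ eval t F - (A + k*(p:ℤ)^m)) ∧
       (∀ i, (p : ℤ) ^ δ ∣ eval t (pderiv i F)) ∧
       ¬ (∀ i, (p : ℤ) ^ (δ + 1) ∣ eval t (pderiv i F)) ∧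
       (∀ i, (p : ℤ) ^ ℓ ∣ t i - a i)) →
      ((∀ i, 0 ≤ Φ t i ∧ Φ t i < (p : ℤ) ^ (m+1)) ∧
       ((p : ℤ) ^ (m+1) ∣ eval (Φ t) F - (A + k'*(p:ℤ)^m)) ∧
       (∀ i, (p : ℤ) ^ δ ∣ eval (Φ t) (pderiv i F)) ∧
       ¬ (∀ i, (p : ℤ) ^ (δ + 1) ∣ eval (Φ t) (pderiv i F)) ∧
       (∀ i, (p : ℤ) ^ ℓ ∣ Φ t i - a i)) := by
    intro t ht
    obtain ⟨hbd, hF, hg, hg', hcg⟩ := ht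
    have hgcong : ∀ i, q ∣ eval (Φ t) (pderiv i F) - eval t (pderiv i F) :=
      fun i => eval_sub_dvd' q _ t (hΦq t) _
    refine ⟨?_, ?_, ?_, ?_, ?_⟩
    · intro i
      exact ⟨Int.emod_nonneg _ (ne_of_gt hP0), Int.emod_lt_of_pos _ hP0⟩
    · -- the F condition
      have e1 : P ∣ eval (Φ t) F - eval (fun i => t i + c * w t i) F :=
        eval_sub_dvd' P _ _ (hΦsub t) F
      have e2 : P ∣ eval (fun i => t i + c * w t i) F - eval t F
          - ∑ i, (c * w t i) * eval t (pderiv i F) :=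
        hPc2.trans (taylor_dvd' c t (fun i => c * w t i) (fun i => dvd_mul_right c _) F)
      have e3 := wvec'_spec p hp δ F (k'-k) t hg hg'
      have e3' : P ∣ c * ((∑ i, w t i * eval t (pderiv i F)) - (p:ℤ)^δ * (k'-k)) := by
        rw [← hcq]
        exact mul_dvd_mul_left c e3
      have hs : c * ∑ i, w t i * eval t (pderiv i F)
          = ∑ i, (c * w t i) * eval t (pderiv i F) := by
        rw [Finset.mul_sum]
        exact Finset.sum_congr rfl (fun i _ => by ring)
      have key : eval (Φ t) F - (A + k' * (p:ℤ)^m)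
          = (eval (Φ t) F - eval (fun i => t i + c * w t i) F)
          + (eval (fun i => t i + c * w t i) F - eval t F
              - ∑ i, (c * w t i) * eval t (pderiv i F))
          + (c * ((∑ i, w t i * eval t (pderiv i F)) - (p:ℤ)^δ * (k'-k)))
          + (eval t F - (A + k * (p:ℤ)^m)) := by
        rw [mul_sub, hs]
        rw [show c * ((p:ℤ)^δ * (k'-k)) = (p:ℤ)^m * (k'-k) by rw [← mul_assoc, hcd]]
        ring
      rw [key]
      exact dvd_add (dvd_add (dvd_add e1 e2) e3') hF
    · intro i
      have he : eval (Φ t) (pderiv i F)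
          = (eval (Φ t) (pderiv i F) - eval t (pderiv i F)) + eval t (pderiv i F) := by ring
      rw [he]
      exact dvd_add (hdq.trans (hgcong i)) (hg i)
    · intro hall
      apply hg'
      intro i
      have he : eval t (pderiv i F)
          = eval (Φ t) (pderiv i F) - (eval (Φ t) (pderiv i F) - eval t (pderiv i F)) := by ring
      rw [he]
      exact dvd_sub (hall i) (hgcong i)
    · intro i
      have he : Φ t i - a i = (Φ t i - t i) + (t i - a i) := by ring
      rw [he]
      exact dvd_add (hΦℓ t i) (hcg i)
  -- the injection
  let f : SolT p s F a ℓ δ (m+1) (A + k*(p:ℤ)^m) → SolT p s F a ℓ δ (m+1) (A + k'*(p:ℤ)^m) :=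
    fun t => ⟨Φ t.1, mem t.1 t.2⟩
  have hinj : Function.Injective f := by
    rintro ⟨t₁, h₁⟩ ⟨t₂, h₂⟩ hf
    have hΦeq : Φ t₁ = Φ t₂ := congrArg Subtype.val hf
    have hq12 : ∀ i, q ∣ t₁ i - t₂ i := by
      intro i
      have h0 : Φ t₁ i = Φ t₂ i := congrFun hΦeq i
      have he : t₁ i - t₂ i = (Φ t₂ i - t₂ i) - (Φ t₁ i - t₁ i) := by rw [h0]; ring
      rw [he]
      exact dvd_sub (hΦq t₂ i) (hΦq t₁ i)
    have hr : (fun j => t₁ j % q) = (fun j => t₂ j % q) := by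
      funext j
      exact Int.ModEq.symm (Int.modEq_iff_dvd.mpr (hq12 j))
    have hww : w t₁ = w t₂ := by rw [hwdef]; simp only [hr]
    refine Subtype.ext (funext fun i => ?_)
    have hco : Φ t₁ i = Φ t₂ i := congrFun hΦeq i
    have hPd : P ∣ t₁ i - t₂ i := by
      have h1 := hΦsub t₁ i
      have h2 := hΦsub t₂ i
      rw [hco, hww] at h1
      have he : t₁ i - t₂ i = (Φ t₂ i - (t₂ i + c * w t₂ i))
          - (Φ t₂ i - (t₁ i + c * w t₂ i)) := by ring
      rw [he]
      exact dvd_sub h2 h1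
    exact int_eq_of_dvd_of_bounds hPd (h₁.1 i).1 (h₁.1 i).2 (h₂.1 i).1 (h₂.1 i).2
  exact Nat.card_le_card_of_injective f hinj


/-- The intermediate set: solutions mod `p^{m+1}` of the congruence only mod `p^m`. -/
def MidT (p s : ℕ) (F : MvPolynomial (Fin s) ℤ) (a : Fin s → ℤ)
    (ℓ δ : ℕ) (m : ℕ) (A : ℤ) : Type :=
  {t : Fin s → ℤ //
    (∀ i, 0 ≤ t i ∧ t i < (p : ℤ) ^ (m+1)) ∧
    ((p : ℤ) ^ m ∣ MvPolynomial.eval t F - A) ∧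
    (∀ i, (p : ℤ) ^ δ ∣ MvPolynomial.eval t (MvPolynomial.pderiv i F)) ∧
    ¬ (∀ i, (p : ℤ) ^ (δ + 1) ∣ MvPolynomial.eval t (MvPolynomial.pderiv i F)) ∧
    (∀ i, (p : ℤ) ^ ℓ ∣ t i - a i)}

instance midFinite (p s : ℕ) (F : MvPolynomial (Fin s) ℤ) (a : Fin s → ℤ)
    (ℓ δ m : ℕ) (A : ℤ) : Finite (MidT p s F a ℓ δ m A) := finite_box' _ _

lemma cardMid_eq_prod (p s : ℕ) (F : MvPolynomial (Fin s) ℤ) (A : ℤ) (a : Fin s → ℤ)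
    (m ℓ δ : ℕ) (hp : p.Prime) (hm : 2*δ+1 ≤ m) (hδℓ : δ+ℓ ≤ m) :
    Nat.card (MidT p s F a ℓ δ m A) = Nat.card (SolT p s F a ℓ δ m A) * p ^ s := by
  classical
  have hp1 : (1:ℤ) < (p:ℤ) := by exact_mod_cast hp.one_lt
  have hQ0 : 0 < ((p:ℤ)^m) := pow_pos (by linarith) _
  have hqQ : (p:ℤ)^(δ+1) ∣ ((p:ℤ)^m) := pow_dvd_pow _ (by omega)
  have hdQ : (p:ℤ)^δ ∣ ((p:ℤ)^m) := pow_dvd_pow _ (by omega)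
  have hlQ : (p:ℤ)^ℓ ∣ ((p:ℤ)^m) := pow_dvd_pow _ (by omega)
  have hQp : (p:ℤ)^(m+1) = ((p:ℤ)^m) * p := by rw [pow_succ]
  -- transfer of side conditions under congruence mod ((p:ℤ)^m)
  have transfer : ∀ t₁ t₂ : Fin s → ℤ, (∀ i, ((p:ℤ)^m) ∣ t₁ i - t₂ i) →
      (((p : ℤ) ^ m ∣ eval t₂ F - A) ∧
       (∀ i, (p : ℤ) ^ δ ∣ eval t₂ (pderiv i F)) ∧
       ¬ (∀ i, (p : ℤ) ^ (δ + 1) ∣ eval t₂ (pderiv i F)) ∧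
       (∀ i, (p : ℤ) ^ ℓ ∣ t₂ i - a i)) →
      (((p : ℤ) ^ m ∣ eval t₁ F - A) ∧
       (∀ i, (p : ℤ) ^ δ ∣ eval t₁ (pderiv i F)) ∧
       ¬ (∀ i, (p : ℤ) ^ (δ + 1) ∣ eval t₁ (pderiv i F)) ∧
       (∀ i, (p : ℤ) ^ ℓ ∣ t₁ i - a i)) := by
    intro t₁ t₂ hc ht
    obtain ⟨hF, hg, hg', hcg⟩ := ht
    have hgcong : ∀ G : MvPolynomial (Fin s) ℤ, ((p:ℤ)^m) ∣ eval t₁ G - eval t₂ G :=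
      fun G => eval_sub_dvd' ((p:ℤ)^m) t₁ t₂ hc G
    refine ⟨?_, ?_, ?_, ?_⟩
    · have he : eval t₁ F - A = (eval t₁ F - eval t₂ F) + (eval t₂ F - A) := by ring
      rw [he]; exact dvd_add (hgcong F) hF
    · intro i
      have he : eval t₁ (pderiv i F)
          = (eval t₁ (pderiv i F) - eval t₂ (pderiv i F)) + eval t₂ (pderiv i F) := by ring
      rw [he]; exact dvd_add (hdQ.trans (hgcong _)) (hg i)
    · intro hall
      apply hg'
      intro i
      have he : eval t₂ (pderiv i F)
          = eval t₁ (pderiv i F) - (eval t₁ (pderiv i F) - eval t₂ (pderiv i F)) := by ring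
      rw [he]; exact dvd_sub (hall i) (hqQ.trans (hgcong _))
    · intro i
      have he : t₁ i - a i = (t₁ i - t₂ i) + (t₂ i - a i) := by ring
      rw [he]; exact dvd_add (hlQ.trans (hc i)) (hcg i)
  -- the equivalence
  have e : MidT p s F a ℓ δ m A ≃ (SolT p s F a ℓ δ m A) × (Fin s → Fin p) := by
    refine ⟨fun t => (⟨fun i => t.1 i % ((p:ℤ)^m), ?_⟩, fun i => ⟨(t.1 i / ((p:ℤ)^m)).toNat, ?_⟩),
      fun ru => ⟨fun i => ru.1.1 i + ((p:ℤ)^m) * ((ru.2 i : ℕ) : ℤ), ?_⟩, ?_, ?_⟩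
    · obtain ⟨hbd, hrest⟩ := t.2
      constructor
      · intro i
        exact ⟨Int.emod_nonneg _ (ne_of_gt hQ0), Int.emod_lt_of_pos _ hQ0⟩
      · exact transfer _ t.1 (fun i => emod_sub_self_dvd ((p:ℤ)^m) (t.1 i)) hrest
    · obtain ⟨hbd, hrest⟩ := t.2
      have h0 : 0 ≤ t.1 i / ((p:ℤ)^m) := Int.ediv_nonneg (hbd i).1 (le_of_lt hQ0)
      have h1 : t.1 i / ((p:ℤ)^m) < p := by
        rw [Int.ediv_lt_iff_lt_mul hQ0]
        have h3 := (hbd i).2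
        have h4 : ((p:ℕ):ℤ)^(m+1) = ↑p * ↑p^m := by ring
        linarith
      omega
    · obtain ⟨hbd, hrest⟩ := ru.1.2
      constructor
      · intro i
        have hu : ((ru.2 i : ℕ) : ℤ) < p := by exact_mod_cast (ru.2 i).2
        have hu0 : (0:ℤ) ≤ ((ru.2 i : ℕ) : ℤ) := by positivity
        beta_reduce
        constructor
        · have h4 := (hbd i).1
          have h5 : (0:ℤ) ≤ ((p:ℤ)^m) * ((ru.2 i : ℕ) : ℤ) := by positivity
          linarith
        · have h1 : ((ru.2 i : ℕ) : ℤ) + 1 ≤ p := by linarith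
          have h2 : ((p:ℤ)^m) * (((ru.2 i : ℕ) : ℤ) + 1) ≤ ((p:ℤ)^m) * p :=
            mul_le_mul_of_nonneg_left h1 (le_of_lt hQ0)
          have h3 := (hbd i).2
          rw [hQp]
          nlinarith
      · refine transfer _ ru.1.1 (fun i => ?_) hrest
        have he : (ru.1.1 i + ((p:ℤ)^m) * ((ru.2 i : ℕ) : ℤ)) - ru.1.1 i = ((p:ℤ)^m) * ((ru.2 i : ℕ) : ℤ) := by
          ring
        rw [he]; exact dvd_mul_right _ _
    · -- left inverse
      intro t
      refine Subtype.ext (funext fun i => ?_)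
      show t.1 i % ((p:ℤ)^m) + ((p:ℤ)^m) * ((t.1 i / ((p:ℤ)^m)).toNat : ℤ) = t.1 i
      have h0 : 0 ≤ t.1 i / ((p:ℤ)^m) := Int.ediv_nonneg (t.2.1 i).1 (le_of_lt hQ0)
      rw [Int.toNat_of_nonneg h0]
      exact Int.emod_add_mul_ediv _ _
    · -- right inverse
      rintro ⟨r, u⟩
      have hu : ∀ i, ((u i : ℕ) : ℤ) < p := fun i => by exact_mod_cast (u i).2
      have hu0 : ∀ i, (0:ℤ) ≤ ((u i : ℕ) : ℤ) := fun i => by positivity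
      refine Prod.ext ?_ ?_
      · refine Subtype.ext (funext fun i => ?_)
        show (r.1 i + ((p:ℤ)^m) * ((u i : ℕ) : ℤ)) % ((p:ℤ)^m) = r.1 i
        rw [Int.add_mul_emod_self_left]
        exact Int.emod_eq_of_lt (r.2.1 i).1 (r.2.1 i).2
      · funext i
        refine Fin.ext ?_
        show ((r.1 i + ((p:ℤ)^m) * ((u i : ℕ) : ℤ)) / ((p:ℤ)^m)).toNat = (u i : ℕ)
        rw [Int.add_mul_ediv_left _ _ (ne_of_gt hQ0)]
        rw [Int.ediv_eq_zero_of_lt (r.2.1 i).1 (r.2.1 i).2]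
        simp
  rw [Nat.card_congr e, Nat.card_prod]
  congr 1
  rw [Nat.card_eq_fintype_card]
  simp


lemma cardMid_eq_sum (p s : ℕ) (F : MvPolynomial (Fin s) ℤ) (A : ℤ) (a : Fin s → ℤ)
    (m ℓ δ : ℕ) (hp : p.Prime) :
    Nat.card (MidT p s F a ℓ δ m A)
      = ∑ k : Fin p, Nat.card (SolT p s F a ℓ δ (m+1) (A + ((k:ℕ):ℤ) * (p:ℤ)^m)) := by
  classical
  have hp1 : (1:ℤ) < (p:ℤ) := by exact_mod_cast hp.one_lt
  have hQ0 : (0:ℤ) < (p:ℤ)^m := pow_pos (by linarith) _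
  have hQm : (p:ℤ)^m ∣ (p:ℤ)^(m+1) := pow_dvd_pow _ (by omega)
  set kOf : (Fin s → ℤ) → ℕ := fun t => (((eval t F - A) / (p:ℤ)^m) % p).toNat with hkOf
  have hkOf_lt : ∀ t, kOf t < p := by
    intro t
    have h1 := Int.emod_nonneg ((eval t F - A) / (p:ℤ)^m) (by linarith : ((p:ℕ):ℤ) ≠ 0)
    have h2 := Int.emod_lt_of_pos ((eval t F - A) / (p:ℤ)^m) (by linarith : (0:ℤ) < ((p:ℕ):ℤ))
    simp only [hkOf]
    omega
  have e : MidT p s F a ℓ δ m A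
      ≃ Σ k : Fin p, SolT p s F a ℓ δ (m+1) (A + ((k:ℕ):ℤ) * (p:ℤ)^m) := by
    refine ⟨fun t => ⟨⟨kOf t.1, hkOf_lt t.1⟩, ⟨t.1, ?_⟩⟩, fun kt => ⟨kt.2.1, ?_⟩, ?_, ?_⟩
    · obtain ⟨hbd, hF, hrest⟩ := t.2
      refine ⟨hbd, ?_, hrest⟩
      obtain ⟨e, he⟩ := hF
      have hdiv : (eval t.1 F - A) / (p:ℤ)^m = e := by
        rw [he]; exact Int.mul_ediv_cancel_left e (ne_of_gt hQ0)
      have hcast : ((kOf t.1 : ℕ) : ℤ) = e % p := by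
        rw [hkOf]
        simp only [hdiv]
        exact Int.toNat_of_nonneg (Int.emod_nonneg _ (by linarith))
      have hkey : eval t.1 F - (A + ((kOf t.1 : ℕ) : ℤ) * (p:ℤ)^m)
          = (p:ℤ)^(m+1) * (e / p) := by
        rw [hcast]
        have h3 : e % p = e - p * (e / p) := by rw [Int.emod_def]
        rw [h3]
        have h4 : eval t.1 F = A + (p:ℤ)^m * e := by linarith [he]
        rw [h4]; ring
      exact ⟨e / p, by push_cast at hkey ⊢; linarith [hkey]⟩
    · obtain ⟨hbd, hF, hrest⟩ := kt.2.2
      refine ⟨hbd, ?_, hrest⟩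
      obtain ⟨e, he⟩ := hF
      refine ⟨((kt.1 : ℕ) : ℤ) + (p:ℤ) * e, ?_⟩
      have : eval kt.2.1 F = A + ((kt.1:ℕ):ℤ) * (p:ℤ)^m + (p:ℤ)^(m+1) * e := by linarith [he]
      rw [this]; ring
    · intro t; exact Subtype.ext rfl
    · rintro ⟨k, t, ht⟩
      obtain ⟨hbd, hF, hrest⟩ := ht
      have hk : (⟨kOf t, hkOf_lt t⟩ : Fin p) = k := by
        obtain ⟨e', he'⟩ := hF
        have h4 : eval t F - A = (p:ℤ)^m * (((k:ℕ):ℤ) + p * e') := by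
          have h5 : eval t F = A + ((k:ℕ):ℤ) * (p:ℤ)^m + (p:ℤ)^(m+1) * e' := by linarith [he']
          rw [h5]; ring
        have hdiv : (eval t F - A) / (p:ℤ)^m = ((k:ℕ):ℤ) + p * e' := by
          rw [h4]; exact Int.mul_ediv_cancel_left _ (ne_of_gt hQ0)
        refine Fin.ext ?_
        show kOf t = (k : ℕ)
        rw [hkOf]
        simp only [hdiv]
        rw [Int.add_mul_emod_self_left]
        rw [Int.emod_eq_of_lt (by positivity) (by exact_mod_cast k.2)]
        simp
      subst hk
      exact congrArg _ (Subtype.ext rfl)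
  haveI : Fintype (MidT p s F a ℓ δ m A) := Fintype.ofFinite _
  haveI : ∀ k : Fin p, Fintype (SolT p s F a ℓ δ (m+1) (A + ((k:ℕ):ℤ) * (p:ℤ)^m)) :=
    fun k => Fintype.ofFinite _
  rw [Nat.card_congr e, Nat.card_eq_fintype_card, Fintype.card_sigma]
  apply Finset.sum_congr rfl
  intro k _
  rw [Nat.card_eq_fintype_card]

/-- The number of `t ∈ (ℤ/p^mℤ)^s` (represented by integer vectors with entries in
`[0, p^m)`) with `F(t) ≡ A mod p^m`, `v_p(∇F(t)) = δ` and `t ≡ a mod p^ℓ`. -/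
noncomputable def gradCount (p s : ℕ) (F : MvPolynomial (Fin s) ℤ) (a : Fin s → ℤ)
    (ℓ δ : ℕ) (m : ℕ) (A : ℤ) : ℕ :=
  Nat.card {t : Fin s → ℤ //
    (∀ i, 0 ≤ t i ∧ t i < (p : ℤ) ^ m) ∧
    ((p : ℤ) ^ m ∣ MvPolynomial.eval t F - A) ∧
    (∀ i, (p : ℤ) ^ δ ∣ MvPolynomial.eval t (MvPolynomial.pderiv i F)) ∧
    ¬ (∀ i, (p : ℤ) ^ (δ + 1) ∣ MvPolynomial.eval t (MvPolynomial.pderiv i F)) ∧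
    (∀ i, (p : ℤ) ^ ℓ ∣ t i - a i)}

theorem stmt_2 (p : ℕ) (hp : p.Prime) (s : ℕ)
    (F : MvPolynomial (Fin s) ℤ) (A : ℤ) (a : Fin s → ℤ)
    (m ℓ δ : ℕ) (hm : 2 * δ + 1 ≤ m) (hδ : δ + ℓ ≤ m) :
    ∀ k : ℤ,
      gradCount p s F a ℓ δ (m + 1) (A + k * (p : ℤ) ^ m) =
        p ^ (s - 1) * gradCount p s F a ℓ δ m A := by
  intro k
  have hgc : ∀ (m' : ℕ) (A' : ℤ),
      gradCount p s F a ℓ δ m' A' = Nat.card (SolT p s F a ℓ δ m' A') := fun _ _ => rfl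
  rcases Nat.eq_zero_or_pos s with hs | hs
  · -- s = 0 : both sides vanish
    have hempty : ∀ (m' : ℕ) (A' : ℤ), Nat.card (SolT p s F a ℓ δ m' A') = 0 := by
      intro m' A'
      haveI : IsEmpty (SolT p s F a ℓ δ m' A') :=
        ⟨fun t => t.2.2.2.2.1 (fun i => absurd i.isLt (by omega))⟩
      exact Nat.card_of_isEmpty
    rw [hgc, hgc, hempty, hempty, Nat.mul_zero]
  · -- s ≥ 1
    set N : ℕ := Nat.card (SolT p s F a ℓ δ (m+1) (A + k * (p:ℤ)^m)) with hN
    set N₀ : ℕ := Nat.card (SolT p s F a ℓ δ m A) with hN₀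
    have hall : ∀ k' : Fin p,
        Nat.card (SolT p s F a ℓ δ (m+1) (A + ((k':ℕ):ℤ) * (p:ℤ)^m)) = N :=
      fun k' => le_antisymm
        (step1_le p s F A a m ℓ δ hp hm hδ ((k':ℕ):ℤ) k)
        (step1_le p s F A a m ℓ δ hp hm hδ k ((k':ℕ):ℤ))
    have h1 : Nat.card (MidT p s F a ℓ δ m A) = p * N := by
      rw [cardMid_eq_sum p s F A a m ℓ δ hp]
      rw [Finset.sum_congr rfl (fun k' _ => hall k')]
      simp [Finset.sum_const, Finset.card_univ, Nat.mul_comm]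
    have h2 : Nat.card (MidT p s F a ℓ δ m A) = N₀ * p ^ s :=
      cardMid_eq_prod p s F A a m ℓ δ hp hm hδ
    have hps : p ^ s = p * p ^ (s-1) := by
      conv_lhs => rw [show s = (s-1)+1 by omega]
      rw [pow_succ]; ring
    have h3 : p * N = p * (p ^ (s-1) * N₀) := by
      rw [← h1, h2, hps]; ring
    have h4 : N = p ^ (s-1) * N₀ := Nat.eq_of_mul_eq_mul_left hp.pos h3
    rw [hgc, hgc, ← hN, ← hN₀, h4]
end

section
/- Let K be a number field of degree n and let r_K(m) be the number of integral ideals of 𝔬_K of norm m. Define the multiplicative 'restricted' function r_res by r_res(p^m) = r_K(p^m) if p ∈ 𝒫₀ ∪ 𝒫₁ and r_res(p^m) = 1 if p ∈ 𝒫₂. Then for all m ∈ ℤ_{>0}: r_K(m) ≤ r_res(m) · Σ_{q} 1_{q | m} τ(q)^n 1_{⟨𝒫₀ ∪ 𝒫₁⟩}(m/q), where the sum runs over square-full q ∈ ⟨𝒫₂⟩ (i.e. q composed only of primes in 𝒫₂ with v_p(q) ≠ 1 for all p). -/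
open NumberField

open scoped Classical

/-- `rK K m` is the number of integral ideals of `𝓞 K` of absolute norm `m`. -/
noncomputable def rK (K : Type) [Field K] [NumberField K] (m : ℕ) : ℕ :=
  Nat.card {I : Ideal (𝓞 K) // Ideal.absNorm I = m}

/-- Primes dividing the discriminant. -/
def P₀ (K : Type) [Field K] [NumberField K] : Set ℕ :=
  {p | p.Prime ∧ (p : ℤ) ∣ NumberField.discr K}

/-- Unramified primes having a prime ideal above them of residue degree one. -/
def P₁ (K : Type) [Field K] [NumberField K] : Set ℕ :=
  {p | p.Prime ∧ ¬ (p : ℤ) ∣ NumberField.discr K ∧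
    ∃ 𝔭 : Ideal (𝓞 K), 𝔭.IsPrime ∧ Ideal.absNorm 𝔭 = p}

/-- Unramified primes all of whose prime ideals have residue degree at least two. -/
def P₂ (K : Type) [Field K] [NumberField K] : Set ℕ :=
  {p | p.Prime ∧ ¬ (p : ℤ) ∣ NumberField.discr K ∧
    ¬ ∃ 𝔭 : Ideal (𝓞 K), 𝔭.IsPrime ∧ Ideal.absNorm 𝔭 = p}

/-- `m ∈ ⟨P⟩`, i.e. all prime factors of `m` lie in `P`. -/
def smoothOver (P : Set ℕ) (m : ℕ) : Prop :=
  ∀ p : ℕ, p.Prime → p ∣ m → p ∈ P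

/-- The multiplicative function `r_res`, agreeing with `r_K` at prime powers of primes
in `P₀ ∪ P₁` and equal to `1` at prime powers of primes in `P₂`. -/
noncomputable def rRes (K : Type) [Field K] [NumberField K] (m : ℕ) : ℕ :=
  m.factorization.prod (fun p e => if p ∈ P₀ K ∪ P₁ K then rK K (p ^ e) else 1)

section Helpers

open UniqueFactorizationMonoid

set_option synthInstance.maxHeartbeats 400000
set_option maxHeartbeats 1000000

variable (K : Type) [Field K] [NumberField K]

private lemma absNorm_span_natCast' (k : ℕ) :
    Ideal.absNorm (Ideal.span {(k : 𝓞 K)} : Ideal (𝓞 K)) = k ^ Module.finrank ℚ K := by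
  have h : ((k : 𝓞 K)) = algebraMap ℤ (𝓞 K) (k : ℤ) := by simp
  let b := Module.Free.chooseBasis ℤ (𝓞 K)
  rw [Ideal.absNorm_span_singleton, h, Algebra.norm_algebraMap_of_basis b,
    ← Module.finrank_eq_card_chooseBasisIndex, RingOfIntegers.rank]
  simp [Int.natAbs_pow]

private lemma split' (s q : ℕ) (hs : 0 < s) (hq : 0 < q) (hsq : s.Coprime q)
    (I : Ideal (𝓞 K)) (hI : Ideal.absNorm I = s * q) :
    (I ⊔ Ideal.span {(s : 𝓞 K)}) * (I ⊔ Ideal.span {(q : 𝓞 K)}) = I ∧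
      Ideal.absNorm (I ⊔ Ideal.span {(s : 𝓞 K)}) = s ∧
      Ideal.absNorm (I ⊔ Ideal.span {(q : 𝓞 K)}) = q := by
  set A := I ⊔ Ideal.span {(s : 𝓞 K)} with hA
  set B := I ⊔ Ideal.span {(q : 𝓞 K)} with hB
  have hspan : Ideal.span {(s : 𝓞 K)} ⊔ Ideal.span {(q : 𝓞 K)} = ⊤ := by
    rw [Ideal.eq_top_iff_one]
    have hb := Nat.gcd_eq_gcd_ab s q
    rw [hsq] at hb
    have h1 : (1 : 𝓞 K) = (s : 𝓞 K) * (Nat.gcdA s q : ℤ) + (q : 𝓞 K) * (Nat.gcdB s q : ℤ) := by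
      have := congrArg (fun z : ℤ => (z : 𝓞 K)) hb
      push_cast at this ⊢
      linear_combination this
    rw [h1]
    exact Submodule.add_mem_sup
      (Ideal.mul_mem_right _ _ (Ideal.subset_span rfl))
      (Ideal.mul_mem_right _ _ (Ideal.subset_span rfl))
  have hABtop : A ⊔ B = ⊤ := by
    rw [eq_top_iff, ← hspan]
    exact sup_le (le_sup_of_le_left le_sup_right) (le_sup_of_le_right le_sup_right)
  have hABmul : A * B = I := by
    apply le_antisymm
    · rw [hA, hB, Ideal.sup_mul, Ideal.mul_sup, Ideal.mul_sup]
      have h1 : ((s * q : ℕ) : 𝓞 K) ∈ I := by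
        rw [← hI]; exact Ideal.absNorm_mem I
      have hsq' : Ideal.span {(s : 𝓞 K)} * Ideal.span {(q : 𝓞 K)} ≤ I := by
        rw [Ideal.span_singleton_mul_span_singleton, Ideal.span_singleton_le_iff_mem]
        push_cast at h1
        exact h1
      exact sup_le (sup_le Ideal.mul_le_left Ideal.mul_le_left)
        (sup_le Ideal.mul_le_right hsq')
    · rw [Ideal.mul_eq_inf_of_coprime hABtop]
      exact le_inf le_sup_left le_sup_left
  have hprod : Ideal.absNorm A * Ideal.absNorm B = s * q := by
    rw [← _root_.map_mul, hABmul, hI]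
  have hAs : Ideal.absNorm A ∣ s := by
    have h1 : Ideal.absNorm A ∣ s ^ Module.finrank ℚ K := by
      rw [← absNorm_span_natCast' K s]
      exact Ideal.absNorm_dvd_absNorm_of_le le_sup_right
    have h2 : (Ideal.absNorm A).Coprime q :=
      Nat.Coprime.coprime_dvd_left h1 (hsq.pow_left _)
    exact h2.dvd_of_dvd_mul_right ⟨Ideal.absNorm B, hprod.symm⟩
  have hBq : Ideal.absNorm B ∣ q := by
    have h1 : Ideal.absNorm B ∣ q ^ Module.finrank ℚ K := by
      rw [← absNorm_span_natCast' K q]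
      exact Ideal.absNorm_dvd_absNorm_of_le le_sup_right
    have h2 : (Ideal.absNorm B).Coprime s :=
      Nat.Coprime.coprime_dvd_left h1 (hsq.symm.pow_left _)
    refine h2.dvd_of_dvd_mul_right ⟨Ideal.absNorm A, ?_⟩
    rw [mul_comm q s, ← hprod]; ring
  obtain ⟨t, ht⟩ := hAs
  obtain ⟨u, hu⟩ := hBq
  have heq : (s * q) * 1 = (s * q) * (t * u) := by
    rw [mul_one]
    calc s * q = (Ideal.absNorm A * t) * (Ideal.absNorm B * u) := by rw [← ht, ← hu]
    _ = (Ideal.absNorm A * Ideal.absNorm B) * (t * u) := by ring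
    _ = (s * q) * (t * u) := by rw [hprod]
  have htu : t * u = 1 := (Nat.eq_of_mul_eq_mul_left (by positivity) heq).symm
  have ht1 : t = 1 := Nat.eq_one_of_mul_eq_one_right htu
  have hu1 : u = 1 := Nat.eq_one_of_mul_eq_one_left htu
  refine ⟨hABmul, ?_, ?_⟩
  · rw [ht, ht1, mul_one]
  · rw [hu, hu1, mul_one]

private lemma rK_finite' (k : ℕ) : Finite {I : Ideal (𝓞 K) // Ideal.absNorm I = k} :=
  (Ideal.finite_setOf_absNorm_eq k).to_subtype

private lemma rK_one' : rK K 1 = 1 := by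
  rw [rK, Nat.card_eq_one_iff_unique]
  constructor
  · constructor
    rintro ⟨I, hI⟩ ⟨J, hJ⟩
    rw [Ideal.absNorm_eq_one_iff] at hI hJ
    simp [Subtype.ext_iff, hI, hJ]
  · exact ⟨⟨⊤, Ideal.absNorm_top⟩⟩

private lemma rK_mul_le' (s q : ℕ) (hs : 0 < s) (hq : 0 < q) (hsq : s.Coprime q) :
    rK K (s * q) ≤ rK K s * rK K q := by
  have : Finite ({I : Ideal (𝓞 K) // Ideal.absNorm I = s}
      × {I : Ideal (𝓞 K) // Ideal.absNorm I = q}) := by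
    have := rK_finite' K s
    have := rK_finite' K q
    infer_instance
  rw [rK, rK, rK, ← Nat.card_prod]
  apply Nat.card_le_card_of_injective
    (f := fun I : {I : Ideal (𝓞 K) // Ideal.absNorm I = s * q} =>
      ((⟨I.1 ⊔ Ideal.span {(s : 𝓞 K)}, ((split' K s q hs hq hsq I.1 I.2).2.1)⟩,
        ⟨I.1 ⊔ Ideal.span {(q : 𝓞 K)}, ((split' K s q hs hq hsq I.1 I.2).2.2)⟩) :
        {I : Ideal (𝓞 K) // Ideal.absNorm I = s}
          × {I : Ideal (𝓞 K) // Ideal.absNorm I = q}))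
  rintro ⟨I, hI⟩ ⟨J, hJ⟩ h
  simp only [Prod.mk.injEq, Subtype.mk.injEq] at h
  have h1 := (split' K s q hs hq hsq I hI).1
  have h2 := (split' K s q hs hq hsq J hJ).1
  simp only [Subtype.mk.injEq]
  rw [← h1, ← h2, h.1, h.2]

private lemma rK_vanish' (p s : ℕ) (hp : p ∈ P₂ K) (hs : 0 < s) (hps : ¬ p ∣ s) :
    rK K (p * s) = 0 := by
  rw [rK, Nat.card_eq_zero]
  left
  rw [isEmpty_subtype]
  intro I
  intro hI
  have hpp := hp.1
  have hcop : p.Coprime s := (Nat.Prime.coprime_iff_not_dvd hpp).mpr hps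
  obtain ⟨-, hnormp, -⟩ := split' K p s hpp.pos hs hcop I hI
  have hirr : Irreducible (Ideal.absNorm (I ⊔ Ideal.span {(p : 𝓞 K)})) := by
    rw [hnormp]
    exact (Nat.irreducible_iff_nat_prime p).mpr hpp
  exact hp.2.2 ⟨I ⊔ Ideal.span {(p : 𝓞 K)}, Ideal.isPrime_of_irreducible_absNorm hirr, hnormp⟩

private lemma rK_prime_pow_le' (p e : ℕ) (hp : p.Prime) :
    rK K (p ^ e) ≤ (e + 1) ^ Module.finrank ℚ K := by
  set n := Module.finrank ℚ K with hn
  set J : Ideal (𝓞 K) := Ideal.span {(p : 𝓞 K)} with hJ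
  have hJ0 : J ≠ 0 := by
    rw [hJ, Submodule.zero_eq_bot, Ne, Ideal.span_singleton_eq_bot]
    exact_mod_cast Nat.cast_ne_zero.mpr hp.ne_zero
  have h_absJ : Ideal.absNorm J = p ^ n := absNorm_span_natCast' K p
  set F₀ := normalizedFactors J with hF₀
  set T := F₀.toFinset with hT
  have haux : ∀ P ∈ F₀, ∃ f, 1 ≤ f ∧ Ideal.absNorm P = p ^ f := by
    intro P hP
    have hprime : Prime P := prime_of_normalized_factor P hP
    have hPdvdJ : P ∣ J := dvd_of_mem_normalizedFactors hP
    have h1 : Ideal.absNorm P ∣ p ^ n := by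
      rw [← h_absJ]
      exact Ideal.absNorm_dvd_absNorm_of_le (Ideal.le_of_dvd hPdvdJ)
    obtain ⟨f, hf, h2⟩ := (Nat.dvd_prime_pow hp).mp h1
    refine ⟨f, ?_, h2⟩
    rcases Nat.eq_zero_or_pos f with rfl | h
    · exfalso
      rw [pow_zero, Ideal.absNorm_eq_one_iff] at h2
      exact (Ideal.isPrime_of_prime hprime).ne_top h2
    · exact h
  have hprodJ : F₀.prod = J := associated_iff_eq.mp (prod_normalizedFactors hJ0)
  have hcard : Multiset.card F₀ ≤ n := by
    have hprodF : (F₀.map Ideal.absNorm).prod = p ^ n := by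
      rw [← h_absJ, ← hprodJ]
      exact (map_multiset_prod Ideal.absNorm F₀).symm
    have h1 : p ^ Multiset.card F₀ ≤ p ^ n := by
      rw [← hprodF]
      have := Multiset.pow_card_le_prod (s := F₀.map Ideal.absNorm) (a := p) ?_
      · simpa using this
      · intro x hx
        obtain ⟨P, hP, rfl⟩ := Multiset.mem_map.mp hx
        obtain ⟨f, hf1, hf2⟩ := haux P hP
        rw [hf2]
        exact Nat.le_self_pow (by omega) p
    exact (Nat.pow_le_pow_iff_right hp.one_lt).mp h1
  have hcount : ∀ (I : Ideal (𝓞 K)), Ideal.absNorm I = p ^ e →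
      ∀ Q ∈ T, Multiset.count Q (normalizedFactors I) ≤ e := by
    intro I hI Q hQ
    have hI0 : I ≠ 0 := by
      rw [Submodule.zero_eq_bot, Ne, ← Ideal.absNorm_eq_zero_iff, hI]
      exact pow_ne_zero e hp.ne_zero
    set v := Multiset.count Q (normalizedFactors I) with hv
    have hrep : Multiset.replicate v Q ≤ normalizedFactors I :=
      Multiset.le_count_iff_replicate_le.mp le_rfl
    have hdvd : Q ^ v ∣ I := by
      have h1 : (Multiset.replicate v Q).prod ∣ (normalizedFactors I).prod :=
        Multiset.prod_dvd_prod_of_le hrep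
      rw [Multiset.prod_replicate] at h1
      exact h1.trans (prod_normalizedFactors hI0).dvd
    have h2 : Ideal.absNorm Q ^ v ∣ p ^ e := by
      rw [← hI, ← map_pow]
      exact map_dvd _ hdvd
    obtain ⟨f, hf1, hf2⟩ := haux Q (Multiset.mem_toFinset.mp hQ)
    rw [hf2, ← pow_mul] at h2
    have := (Nat.pow_dvd_pow_iff_le_right hp.one_lt).mp h2
    calc v ≤ f * v := Nat.le_mul_of_pos_left v (by omega)
    _ ≤ e := this
  have hfactors_mem : ∀ (I : Ideal (𝓞 K)), Ideal.absNorm I = p ^ e →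
      ∀ Q ∈ normalizedFactors I, Q ∈ T := by
    intro I hI Q hQ
    have hI0 : I ≠ 0 := by
      rw [Submodule.zero_eq_bot, Ne, ← Ideal.absNorm_eq_zero_iff, hI]
      exact pow_ne_zero e hp.ne_zero
    have hQp : Prime Q := prime_of_normalized_factor Q hQ
    have hQI : Q ∣ I := dvd_of_mem_normalizedFactors hQ
    have hIJ : I ∣ J ^ e := by
      rw [Ideal.dvd_iff_le, hJ, Ideal.span_singleton_pow, Ideal.span_singleton_le_iff_mem]
      have : ((p ^ e : ℕ) : 𝓞 K) ∈ I := by rw [← hI]; exact Ideal.absNorm_mem I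
      push_cast at this
      exact this
    have hQJ : Q ∣ J := hQp.dvd_of_dvd_pow (hQI.trans hIJ)
    rw [hT, Multiset.mem_toFinset, hF₀, mem_normalizedFactors_iff hJ0]
    exact ⟨hQp, hQJ⟩
  have hinj : Function.Injective
      (fun I : {I : Ideal (𝓞 K) // Ideal.absNorm I = p ^ e} =>
        (fun Q : T => (⟨Multiset.count Q.1 (normalizedFactors I.1),
          Nat.lt_succ_of_le (hcount I.1 I.2 Q.1 Q.2)⟩ : Fin (e + 1)))) := by
    rintro ⟨I₁, hI₁⟩ ⟨I₂, hI₂⟩ h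
    simp only [Subtype.mk.injEq]
    have h10 : I₁ ≠ 0 := by
      rw [Submodule.zero_eq_bot, Ne, ← Ideal.absNorm_eq_zero_iff, hI₁]
      exact pow_ne_zero e hp.ne_zero
    have h20 : I₂ ≠ 0 := by
      rw [Submodule.zero_eq_bot, Ne, ← Ideal.absNorm_eq_zero_iff, hI₂]
      exact pow_ne_zero e hp.ne_zero
    have hfac : normalizedFactors I₁ = normalizedFactors I₂ := by
      ext Q
      by_cases hQ : Q ∈ T
      · have := congrFun h ⟨Q, hQ⟩
        simpa [Fin.ext_iff] using this
      · rw [Multiset.count_eq_zero_of_notMem, Multiset.count_eq_zero_of_notMem]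
        · exact fun hmem => hQ (hfactors_mem I₂ hI₂ Q hmem)
        · exact fun hmem => hQ (hfactors_mem I₁ hI₁ Q hmem)
    calc I₁ = (normalizedFactors I₁).prod := (associated_iff_eq.mp (prod_normalizedFactors h10)).symm
    _ = (normalizedFactors I₂).prod := by rw [hfac]
    _ = I₂ := associated_iff_eq.mp (prod_normalizedFactors h20)
  calc rK K (p ^ e) ≤ Nat.card (T → Fin (e + 1)) := Nat.card_le_card_of_injective _ hinj
  _ = (e + 1) ^ T.card := by
      rw [Nat.card_eq_fintype_card, Fintype.card_fun]
      simp
  _ ≤ (e + 1) ^ n := by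
      apply Nat.pow_le_pow_right (by omega)
      exact le_trans (Multiset.toFinset_card_le F₀) hcard

private lemma rK_prod_le' (t : Finset ℕ) (f : ℕ → ℕ) (ht : ∀ x ∈ t, x.Prime) :
    rK K (∏ x ∈ t, x ^ f x) ≤ ∏ x ∈ t, rK K (x ^ f x) := by
  induction t using Finset.induction_on with
  | empty => simp [rK_one']
  | @insert a t ha ih =>
    have hap : a.Prime := ht a (Finset.mem_insert_self a t)
    have ht' : ∀ x ∈ t, x.Prime := fun x hx => ht x (Finset.mem_insert_of_mem hx)
    rw [Finset.prod_insert ha, Finset.prod_insert ha]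
    have hcop : (a ^ f a).Coprime (∏ x ∈ t, x ^ f x) := by
      apply Nat.Coprime.pow_left
      apply Nat.Coprime.prod_right
      intro x hx
      apply Nat.Coprime.pow_right
      rw [Nat.coprime_primes hap (ht' x hx)]
      rintro rfl
      exact ha hx
    have h1 : 0 < a ^ f a := pow_pos hap.pos _
    have h2 : 0 < ∏ x ∈ t, x ^ f x :=
      Finset.prod_pos fun x hx => pow_pos (ht' x hx).pos _
    exact le_trans (rK_mul_le' K _ _ h1 h2 hcop) (Nat.mul_le_mul_left _ (ih ht'))

private lemma tau_prod' (t : Finset ℕ) (f : ℕ → ℕ) (ht : ∀ x ∈ t, x.Prime) :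
    (∏ x ∈ t, x ^ f x).divisors.card = ∏ x ∈ t, (f x + 1) := by
  induction t using Finset.induction_on with
  | empty => simp
  | @insert a t ha ih =>
    have hap : a.Prime := ht a (Finset.mem_insert_self a t)
    have ht' : ∀ x ∈ t, x.Prime := fun x hx => ht x (Finset.mem_insert_of_mem hx)
    rw [Finset.prod_insert ha, Finset.prod_insert ha]
    have hcop : (a ^ f a).Coprime (∏ x ∈ t, x ^ f x) := by
      apply Nat.Coprime.pow_left
      apply Nat.Coprime.prod_right
      intro x hx
      apply Nat.Coprime.pow_right
      rw [Nat.coprime_primes hap (ht' x hx)]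
      rintro rfl
      exact ha hx
    rw [hcop.card_divisors_mul, ih ht']
    congr 1
    rw [Nat.divisors_prime_pow hap, Finset.card_map, Finset.card_range]

private lemma mem_union_of_not_mem_P₂' (p : ℕ) (hp : p.Prime) (h : p ∉ P₂ K) :
    p ∈ P₀ K ∪ P₁ K := by
  by_cases hd : (p : ℤ) ∣ NumberField.discr K
  · exact Or.inl ⟨hp, hd⟩
  · right
    refine ⟨hp, hd, ?_⟩
    by_contra hne
    exact h ⟨hp, hd, hne⟩

private lemma not_mem_union_of_mem_P₂' (p : ℕ) (h : p ∈ P₂ K) : p ∉ P₀ K ∪ P₁ K := by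
  rintro (⟨-, hd⟩ | ⟨-, -, he⟩)
  · exact h.2.1 hd
  · exact h.2.2 he

end Helpers

set_option synthInstance.maxHeartbeats 400000 in
set_option maxHeartbeats 1000000 in
theorem stmt_19 (K : Type) [Field K] [NumberField K] (m : ℕ) (hm : 0 < m) :
    rK K m ≤ rRes K m *
      ∑ q ∈ m.divisors,
        (if (∀ p : ℕ, p.Prime → p ∣ q → p ^ 2 ∣ q) ∧ smoothOver (P₂ K) q ∧
            smoothOver (P₀ K ∪ P₁ K) (m / q)
         then q.divisors.card ^ (Module.finrank ℚ K) else 0) := by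
  set n := Module.finrank ℚ K with hn
  set F := m.primeFactors with hF
  have hFprime : ∀ x ∈ F, x.Prime := fun x hx => Nat.prime_of_mem_primeFactors hx
  by_cases hgood : ∀ p ∈ F.filter (· ∈ P₂ K), 2 ≤ m.factorization p
  · -- good case: every `P₂` prime divides `m` to order at least 2
    set t₂ := F.filter (· ∈ P₂ K) with ht₂
    set t₁ := F.filter (fun p => ¬ p ∈ P₂ K) with ht₁
    have ht₂prime : ∀ x ∈ t₂, x.Prime := fun x hx => hFprime x (Finset.mem_filter.mp hx).1
    have ht₁prime : ∀ x ∈ t₁, x.Prime := fun x hx => hFprime x (Finset.mem_filter.mp hx).1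
    set q := ∏ p ∈ t₂, p ^ m.factorization p with hq
    set s := ∏ p ∈ t₁, p ^ m.factorization p with hs
    have hqpos : 0 < q := Finset.prod_pos fun x hx => pow_pos (ht₂prime x hx).pos _
    have hspos : 0 < s := Finset.prod_pos fun x hx => pow_pos (ht₁prime x hx).pos _
    have hmfac : ∏ p ∈ F, p ^ m.factorization p = m := by
      rw [hF]
      exact (Nat.prod_factorization_eq_prod_primeFactors _).symm.trans
        (Nat.factorization_prod_pow_eq_self hm.ne')
    have hqs : q * s = m := by
      rw [hq, hs, Finset.prod_filter_mul_prod_filter_not]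
      exact hmfac
    have hqdvd : q ∣ m := ⟨s, hqs.symm⟩
    have hqmem : q ∈ m.divisors := Nat.mem_divisors.mpr ⟨hqdvd, hm.ne'⟩
    have hmq : m / q = s := by rw [← hqs, Nat.mul_div_cancel_left s hqpos]
    have hqfac : ∀ r : ℕ, r.Prime → r ∣ q → r ∈ t₂ := by
      intro r hr hrq
      obtain ⟨x, hx, hdvd⟩ := hr.prime.exists_mem_finset_dvd hrq
      have : r ∣ x := hr.prime.dvd_of_dvd_pow hdvd
      rwa [(Nat.prime_dvd_prime_iff_eq hr (ht₂prime x hx)).mp this]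
    have hsfac : ∀ r : ℕ, r.Prime → r ∣ s → r ∈ t₁ := by
      intro r hr hrs
      obtain ⟨x, hx, hdvd⟩ := hr.prime.exists_mem_finset_dvd hrs
      have : r ∣ x := hr.prime.dvd_of_dvd_pow hdvd
      rwa [(Nat.prime_dvd_prime_iff_eq hr (ht₁prime x hx)).mp this]
    have hcond : (∀ p : ℕ, p.Prime → p ∣ q → p ^ 2 ∣ q) ∧ smoothOver (P₂ K) q ∧
        smoothOver (P₀ K ∪ P₁ K) (m / q) := by
      refine ⟨?_, ?_, ?_⟩
      · intro r hr hrq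
        have hrt₂ := hqfac r hr hrq
        have h2 : 2 ≤ m.factorization r := hgood r hrt₂
        calc r ^ 2 ∣ r ^ m.factorization r := pow_dvd_pow r h2
        _ ∣ q := Finset.dvd_prod_of_mem _ hrt₂
      · intro r hr hrq
        exact (Finset.mem_filter.mp (hqfac r hr hrq)).2
      · intro r hr hrs
        rw [hmq] at hrs
        exact mem_union_of_not_mem_P₂' K r hr (Finset.mem_filter.mp (hsfac r hr hrs)).2
    have hsum : (q.divisors.card : ℕ) ^ n ≤
        ∑ q' ∈ m.divisors,
          (if (∀ p : ℕ, p.Prime → p ∣ q' → p ^ 2 ∣ q') ∧ smoothOver (P₂ K) q' ∧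
              smoothOver (P₀ K ∪ P₁ K) (m / q')
           then q'.divisors.card ^ n else 0) := by
      have := Finset.single_le_sum
        (f := fun q' => (if (∀ p : ℕ, p.Prime → p ∣ q' → p ^ 2 ∣ q') ∧ smoothOver (P₂ K) q' ∧
              smoothOver (P₀ K ∪ P₁ K) (m / q')
           then q'.divisors.card ^ n else 0)) (fun i _ => Nat.zero_le _) hqmem
      simp only [if_pos hcond] at this
      exact this
    have hrres : rRes K m = ∏ p ∈ t₁, rK K (p ^ m.factorization p) := by
      rw [rRes, Nat.prod_factorization_eq_prod_primeFactors, ← hF,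
        ← Finset.prod_filter_mul_prod_filter_not F (· ∈ P₂ K), ← ht₂, ← ht₁]
      have h2 : ∏ p ∈ t₂, (if p ∈ P₀ K ∪ P₁ K then rK K (p ^ m.factorization p) else 1) = 1 := by
        apply Finset.prod_eq_one
        intro x hx
        rw [if_neg (not_mem_union_of_mem_P₂' K x (Finset.mem_filter.mp hx).2)]
      have h1 : ∏ p ∈ t₁, (if p ∈ P₀ K ∪ P₁ K then rK K (p ^ m.factorization p) else 1)
          = ∏ p ∈ t₁, rK K (p ^ m.factorization p) := by
        apply Finset.prod_congr rfl
        intro x hx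
        rw [if_pos (mem_union_of_not_mem_P₂' K x (ht₁prime x hx) (Finset.mem_filter.mp hx).2)]
      rw [h2, h1, one_mul]
    have ht₂bound : ∏ p ∈ t₂, rK K (p ^ m.factorization p) ≤ q.divisors.card ^ n := by
      calc ∏ p ∈ t₂, rK K (p ^ m.factorization p)
          ≤ ∏ p ∈ t₂, (m.factorization p + 1) ^ n :=
            Finset.prod_le_prod' fun p hp => rK_prime_pow_le' K p _ (ht₂prime p hp)
      _ = (∏ p ∈ t₂, (m.factorization p + 1)) ^ n := by rw [Finset.prod_pow]
      _ = q.divisors.card ^ n := by rw [hq, tau_prod' t₂ _ ht₂prime]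
    calc rK K m = rK K (∏ p ∈ F, p ^ m.factorization p) := by rw [hmfac]
    _ ≤ ∏ p ∈ F, rK K (p ^ m.factorization p) := rK_prod_le' K F _ hFprime
    _ = (∏ p ∈ t₂, rK K (p ^ m.factorization p)) * ∏ p ∈ t₁, rK K (p ^ m.factorization p) := by
        rw [Finset.prod_filter_mul_prod_filter_not]
    _ ≤ q.divisors.card ^ n * rRes K m := by
        rw [hrres]
        exact Nat.mul_le_mul_right _ ht₂bound
    _ = rRes K m * q.divisors.card ^ n := by ring
    _ ≤ _ := Nat.mul_le_mul_left _ hsum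
  · -- bad case: some prime in `P₂` divides `m` exactly once, so `rK K m = 0`
    push_neg at hgood
    obtain ⟨p, hpt₂, hple⟩ := hgood
    obtain ⟨hpF, hpP₂⟩ := Finset.mem_filter.mp hpt₂
    have hpp : p.Prime := hFprime p hpF
    have hpdvd : p ∣ m := Nat.dvd_of_mem_primeFactors hpF
    have hfac1 : m.factorization p = 1 := by
      have h1 : 1 ≤ m.factorization p := by
        rw [← Nat.Prime.pow_dvd_iff_le_factorization hpp hm.ne', pow_one]
        exact hpdvd
      omega
    have hmp : m = p * (m / p) := (Nat.mul_div_cancel' hpdvd).symm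
    have hmppos : 0 < m / p := Nat.div_pos (Nat.le_of_dvd hm hpdvd) hpp.pos
    have hnd : ¬ p ∣ m / p := by
      intro h
      have h2 : p ^ 2 ∣ m := by
        obtain ⟨c, hc⟩ := h
        exact ⟨c, by rw [hmp, hc]; ring⟩
      rw [Nat.Prime.pow_dvd_iff_le_factorization hpp hm.ne'] at h2
      omega
    have hzero : rK K m = 0 := by
      rw [hmp]
      exact rK_vanish' K p (m / p) hpP₂ hmppos hnd
    rw [hzero]
    exact Nat.zero_le _
end
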